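/- Let X be a finite-dimensional real Hilbert space, a : X × X → ℝ a bilinear form with associated operator T (⟨Tw,v⟩ = a(w,v)). Suppose there exists a symmetric, coercive bilinear form p : X × X → ℝ such that φ(v,w) := p(Tv,w) + p(v,Tw) is coercive with constant c > 0. Then every solution y of ẏ(t) = −Ty(t) satisfies p(y(t),y(t)) ≤ e^{−(c/M) t} p(y(0),y(0)) for all t ≥ 0, where M is a bound with p(v,v) ≤ M‖v‖²; in particular the system is Lyapunov stable and y(t) → 0. -/
import Mathlib


open scoped RealInnerProductSpace

/-- Lyapunov stability via a Lyapunov functional: if `p` is a symmetric bilinear form with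
`m‖v‖² ≤ p(v,v) ≤ M‖v‖²` (`0 < m ≤ M`) and `φ(v,w) := p(Tv,w) + p(v,Tw)` is coercive with
constant `c > 0`, then every solution of `ẏ = −Ty` satisfies
`p(y(t),y(t)) ≤ e^{−(c/M)t} p(y(0),y(0))` for `t ≥ 0`. -/
theorem lyapunov_function_decay
    {X : Type*} [NormedAddCommGroup X] [InnerProductSpace ℝ X] [FiniteDimensional ℝ X]
    (a : X →ₗ[ℝ] X →ₗ[ℝ] ℝ)
    (T : X →L[ℝ] X) (hT : ∀ w v, ⟪T w, v⟫ = a w v)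
    (p : X →ₗ[ℝ] X →ₗ[ℝ] ℝ) (hpsym : ∀ v w, p v w = p w v)
    (m M : ℝ) (hm : 0 < m) (hmM : m ≤ M)
    (hplow : ∀ v : X, m * ‖v‖ ^ 2 ≤ p v v) (hpupp : ∀ v : X, p v v ≤ M * ‖v‖ ^ 2)
    (c : ℝ) (hc : 0 < c)
    (hφ : ∀ v : X, c * ‖v‖ ^ 2 ≤ p (T v) v + p v (T v)) :
    ∀ y : ℝ → X, (∀ t : ℝ, HasDerivAt y (-(T (y t))) t) →
      ∀ t : ℝ, 0 ≤ t → p (y t) (y t) ≤ Real.exp (-(c / M) * t) * p (y 0) (y 0) := by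
  intro y hy t ht
  have hM : (0 : ℝ) < M := lt_of_lt_of_le hm hmM
  set k : ℝ := c / M with hk
  have hkpos : 0 < k := div_pos hc hM
  -- continuous bilinear version of p
  let L : X →ₗ[ℝ] X →L[ℝ] ℝ :=
    { toFun := fun v => LinearMap.toContinuousLinearMap (p v)
      map_add' := by intro u v; ext w; simp
      map_smul' := by intro r v; ext w; simp }
  let B : X →L[ℝ] X →L[ℝ] ℝ := LinearMap.toContinuousLinearMap L
  have hB : ∀ v w, B v w = p v w := fun v w => rfl
  -- derivative of V t = p (y t) (y t)
  have hV : ∀ s : ℝ, HasDerivAt (fun s => p (y s) (y s))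
      (-(p (T (y s)) (y s) + p (y s) (T (y s)))) s := by
    intro s
    have h1 : HasDerivAt (fun s => B (y s)) (B (-(T (y s)))) s :=
      B.hasFDerivAt.comp_hasDerivAt s (hy s)
    have h2 := h1.clm_apply (hy s)
    have h3 : B (-(T (y s))) (y s) + B (y s) (-(T (y s)))
        = -(p (T (y s)) (y s) + p (y s) (T (y s))) := by
      simp [hB, map_neg]
      ring
    rw [h3] at h2
    exact h2
  -- g t = exp(k t) * V t is antitone
  have hg : ∀ s : ℝ, HasDerivAt (fun s => Real.exp (k * s) * p (y s) (y s))
      (k * Real.exp (k * s) * (p (y s) (y s))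
        + Real.exp (k * s) * (-(p (T (y s)) (y s) + p (y s) (T (y s))))) s := by
    intro s
    have he : HasDerivAt (fun s => Real.exp (k * s)) (k * Real.exp (k * s)) s := by
      have := ((hasDerivAt_id s).const_mul k).exp
      simpa [mul_comm] using this
    exact he.mul (hV s)
  have hanti : Antitone (fun s => Real.exp (k * s) * p (y s) (y s)) := by
    apply antitone_of_deriv_nonpos
    · intro s; exact (hg s).differentiableAt
    · intro s
      rw [(hg s).deriv]
      have hpos := Real.exp_pos (k * s)
      have h1 : k * p (y s) (y s) ≤ c * ‖y s‖ ^ 2 := by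
        have := hpupp (y s)
        calc k * p (y s) (y s) ≤ k * (M * ‖y s‖ ^ 2) :=
              mul_le_mul_of_nonneg_left this hkpos.le
          _ = c * ‖y s‖ ^ 2 := by
              have hkM : k * M = c := div_mul_cancel₀ c (ne_of_gt hM)
              rw [← hkM]; ring
      have h2 := hφ (y s)
      nlinarith [hpos]
  have key := hanti ht
  have key' : Real.exp (k * t) * p (y t) (y t) ≤ p (y 0) (y 0) := by
    simpa using key
  have hne : -(c / M) * t = -(k * t) := by rw [hk]; ring
  rw [hne, Real.exp_neg, ← div_eq_inv_mul, le_div_iff₀ (Real.exp_pos _)]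
  linarith [key', mul_comm (Real.exp (k * t)) (p (y t) (y t))]
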